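/- If d = 2, then the Gram matrix of the ideal M̃^(1) is not invertible and the corresponding generators vanish: Ĝ^(1)_{[AA][kl]} = 0 and Ĝ^(1)_{[kl][AA]} = 0 for all k,l ∈ {S,A}; equivalently, (E_A⊗E_A) Q^(1) = 0 and Q^(1) (E_A⊗E_A) = 0 when d = 2. -/

import Mathlib

open Matrix Kronecker

namespace WBA

/-- Configurations of `p` qudits of local dimension `d`. -/
abbrev Conf (d p : ℕ) := Fin p → Fin d

/-- Operators on `H = (ℂ^d)^{⊗ 2p}`, indexed by pairs (unprimed configuration, primed
configuration). -/
abbrev Op (d p : ℕ) := Matrix (Conf d p × Conf d p) (Conf d p × Conf d p) ℂ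

/-- The projector `P⁺_{a,c'}` onto the maximally entangled state between unprimed system `a`
and primed system `c`, tensored with the identity elsewhere. -/
noncomputable def Pplus (d p : ℕ) (a c : Fin p) : Op d p :=
  Matrix.of fun xy uv =>
    if xy.1 a = xy.2 c ∧ uv.1 a = uv.2 c ∧ (∀ j, j ≠ a → xy.1 j = uv.1 j) ∧
        (∀ j, j ≠ c → xy.2 j = uv.2 j) then
      (d : ℂ)⁻¹
    else 0

/-- `d • P⁺_{a,c'}`, i.e. the partially transposed swap `V^{t_{c'}}_{(a,c')}`. -/
noncomputable def arc (d p : ℕ) (a c : Fin p) : Op d p := (d : ℂ) • Pplus d p a c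

/-- `V^(k) = ∏_{j=p-k+1}^{p} (d • P⁺_{j,j'})` (product over the last `k` systems;
`V^(0) = 1`). -/
noncomputable def Vop (d p k : ℕ) : Op d p :=
  (((List.range p).filter (fun j => decide (p - k ≤ j))).map
    (fun j => if h : j < p then arc d p ⟨j, h⟩ ⟨j, h⟩ else 1)).prod

/-- `Q^(p) = d^{-p} V^(p)` and `Q^(k) = d^{-k} V^(k) - d^{-(k+1)} V^(k+1)` for `k < p`. -/
noncomputable def Qop (d p k : ℕ) : Op d p :=
  if k = p then ((d : ℂ) ^ p)⁻¹ • Vop d p p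
  else ((d : ℂ) ^ k)⁻¹ • Vop d p k - ((d : ℂ) ^ (k + 1))⁻¹ • Vop d p (k + 1)

/-- Permutation matrix on `(ℂ^d)^{⊗ n}`: sends `e_v` to `e_{v ∘ σ⁻¹}`. -/
noncomputable def permMat (d n : ℕ) (σ : Equiv.Perm (Fin n)) :
    Matrix (Fin n → Fin d) (Fin n → Fin d) ℂ :=
  Matrix.of fun x u => if x = u ∘ ⇑σ⁻¹ then 1 else 0

/-- `V_σ`: permutation of the unprimed factors, identity on the primed factors. -/
noncomputable def VL (d p : ℕ) (σ : Equiv.Perm (Fin p)) : Op d p :=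
  (permMat d p σ) ⊗ₖ (1 : Matrix (Conf d p) (Conf d p) ℂ)

/-- `V'_τ`: permutation of the primed factors, identity on the unprimed factors. -/
noncomputable def VR (d p : ℕ) (τ : Equiv.Perm (Fin p)) : Op d p :=
  (1 : Matrix (Conf d p) (Conf d p) ℂ) ⊗ₖ (permMat d p τ)

/-- Identification of `H` with `(ℂ^d)^{⊗ (p+p)}`. -/
def glue (d p : ℕ) : (Conf d p × Conf d p) ≃ (Fin (p + p) → Fin d) :=
  (Equiv.sumArrowEquivProdArrow (Fin p) (Fin p) (Fin d)).symm.trans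
    (Equiv.arrowCongr finSumFinEquiv (Equiv.refl (Fin d)))

/-- The permutation operator `W_π`, `π ∈ S_{2p}`, permuting all `2p` tensor factors of `H`. -/
noncomputable def Wfull (d p : ℕ) (π : Equiv.Perm (Fin (p + p))) : Op d p :=
  (permMat d (p + p) π).submatrix (glue d p) (glue d p)

/-- Partial transpose over the `p` primed factors:
`⟨x,y|M^Γ|u,v⟩ = ⟨x,v|M|u,y⟩`. -/
noncomputable def ptrans (d p : ℕ) (M : Op d p) : Op d p :=
  Matrix.of fun xy uv => M (xy.1, uv.2) (uv.1, xy.2)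

/-- The algebra `A^d_{p,p}` of partially transposed permutation operators, as a
linear subspace of `End(H)`. -/
noncomputable def Apt (d p : ℕ) : Submodule ℂ (Op d p) :=
  Submodule.span ℂ {M | ∃ π : Equiv.Perm (Fin (p + p)), M = ptrans d p (Wfull d p π)}

/-- Extension of an operator on systems `1,…,p-r,1',…,(p-r)'` by the identity on the
remaining systems. -/
noncomputable def embed (d p r : ℕ) (M : Op d (p - r)) : Op d p :=
  Matrix.of fun xy uv =>
    M (xy.1 ∘ Fin.castLE (Nat.sub_le p r), xy.2 ∘ Fin.castLE (Nat.sub_le p r))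
      (uv.1 ∘ Fin.castLE (Nat.sub_le p r), uv.2 ∘ Fin.castLE (Nat.sub_le p r)) *
    (if ∀ j : Fin p, p - r ≤ (j : ℕ) → xy.1 j = uv.1 j ∧ xy.2 j = uv.2 j then 1 else 0)

/-- The ideal `M̃^(k) = span{ V_σ V'_τ Q^(k) V_π V'_ρ }` of `A^d_{p,p}`. -/
noncomputable def Mtil (d p k : ℕ) : Submodule ℂ (Op d p) :=
  Submodule.span ℂ {M | ∃ σ τ π ρ : Equiv.Perm (Fin p),
    M = VL d p σ * VR d p τ * Qop d p k * (VL d p π * VR d p ρ)}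

/-- Labels for the two irreps of `S_2`: symmetric `S` and antisymmetric `A`. -/
inductive SA
  | S
  | A
deriving DecidableEq

instance instFintypeSA : Fintype SA :=
  ⟨{SA.S, SA.A}, fun x => by cases x <;> simp⟩

/-- The swap operator on `ℂ^d ⊗ ℂ^d`. -/
noncomputable def Fsw (d : ℕ) : Matrix (Conf d 2) (Conf d 2) ℂ :=
  Matrix.of fun x u => if x 0 = u 1 ∧ x 1 = u 0 then 1 else 0

/-- Symmetric and antisymmetric projectors on `ℂ^d ⊗ ℂ^d`. -/
noncomputable def Esm (d : ℕ) : SA → Matrix (Conf d 2) (Conf d 2) ℂ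
  | SA.S => (2 : ℂ)⁻¹ • (1 + Fsw d)
  | SA.A => (2 : ℂ)⁻¹ • (1 - Fsw d)

/-- `E_i ⊗ E_j` on `H = (ℂ^d)^{⊗4}`. -/
noncomputable def EE (d : ℕ) (i j : SA) : Op d 2 := (Esm d i) ⊗ₖ (Esm d j)

/-- `E_i ⊗ 1` on `H = (ℂ^d)^{⊗4}`. -/
noncomputable def EId (d : ℕ) (i : SA) : Op d 2 :=
  (Esm d i) ⊗ₖ (1 : Matrix (Conf d 2) (Conf d 2) ℂ)

/-- Multiplicities `m_S = d(d+1)/2`, `m_A = d(d-1)/2` (real valued). -/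
noncomputable def mR (d : ℕ) : SA → ℝ
  | SA.S => (d : ℝ) * ((d : ℝ) + 1) / 2
  | SA.A => (d : ℝ) * ((d : ℝ) - 1) / 2

/-- Multiplicities `m_S = d(d+1)/2`, `m_A = d(d-1)/2` (complex valued). -/
noncomputable def mC (d : ℕ) : SA → ℂ
  | SA.S => (d : ℂ) * ((d : ℂ) + 1) / 2
  | SA.A => (d : ℂ) * ((d : ℂ) - 1) / 2

/-- `V^(1) = d • P⁺_{2,2'}` for `p = 2`. -/
noncomputable def V1 (d : ℕ) : Op d 2 := arc d 2 1 1

/-- `V^(2) = d² • P⁺_{2,2'} P⁺_{1,1'}` for `p = 2`. -/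
noncomputable def V2 (d : ℕ) : Op d 2 := arc d 2 1 1 * arc d 2 0 0

/-- `Q^(2) = d^{-2} V^(2)` for `p = 2`. -/
noncomputable def Q2 (d : ℕ) : Op d 2 := ((d : ℂ) ^ 2)⁻¹ • V2 d

/-- `Q^(1) = d^{-1} V^(1) - d^{-2} V^(2)` for `p = 2`. -/
noncomputable def Q1 (d : ℕ) : Op d 2 :=
  (d : ℂ)⁻¹ • V1 d - ((d : ℂ) ^ 2)⁻¹ • V2 d

/-- `G^(2)_{kl} = (d²/√(m_k m_l)) (E_k ⊗ 1) Q^(2) (E_l ⊗ 1)`. -/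
noncomputable def G2 (d : ℕ) (k l : SA) : Op d 2 :=
  ((d : ℂ) ^ 2 / ((Real.sqrt (mR d k * mR d l) : ℝ) : ℂ)) • (EId d k * Q2 d * EId d l)

/-- `G^(2) = G^(2)_{SS} + G^(2)_{AA}`. -/
noncomputable def G2sum (d : ℕ) : Op d 2 := G2 d SA.S SA.S + G2 d SA.A SA.A

/-- The Gram coefficients `b_{SS} = (d+2)/(4d)`, `b_{SA} = b_{AS} = 1/4`,
`b_{AA} = (d-2)/(4d)`. -/
noncomputable def bc (d : ℕ) : SA → SA → ℂ
  | SA.S, SA.S => ((d : ℂ) + 2) / (4 * (d : ℂ))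
  | SA.S, SA.A => 1 / 4
  | SA.A, SA.S => 1 / 4
  | SA.A, SA.A => ((d : ℂ) - 2) / (4 * (d : ℂ))

/-- `Ĝ^(1)_{[ij][kl]} = (E_i ⊗ E_j) Q^(1) (E_k ⊗ E_l)`. -/
noncomputable def Ghat1 (d : ℕ) (i j k l : SA) : Op d 2 :=
  EE d i j * Q1 d * EE d k l

/-- `G^(1)_{[ij][kl]} = b_{ij}⁻¹ Ĝ^(1)_{[ij][kl]}`. -/
noncomputable def G1 (d : ℕ) (i j k l : SA) : Op d 2 := (bc d i j)⁻¹ • Ghat1 d i j k l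

/-- `G^(1) = Σ_{ij} G^(1)_{[ij][ij]}`. -/
noncomputable def G1sum (d : ℕ) : Op d 2 := ∑ i : SA, ∑ j : SA, G1 d i j i j

/-- `G^(0)_{ij} = E_i⊗E_j - b_{ij}⁻¹ (E_i⊗E_j)Q^(1)(E_i⊗E_j)
- δ_{ij} (d²/m_i) (E_i⊗1)Q^(2)(E_i⊗1)`. -/
noncomputable def G0 (d : ℕ) (i j : SA) : Op d 2 :=
  EE d i j - (bc d i j)⁻¹ • (EE d i j * Q1 d * EE d i j) -
    (if i = j then (d : ℂ) ^ 2 / mC d i else 0) • (EId d i * Q2 d * EId d i)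


private lemma sum_conf (f : (Fin 2 → Fin 2) → ℂ) :
    ∑ x : Fin 2 → Fin 2, f x = f ![0,0] + f ![0,1] + f ![1,0] + f ![1,1] := by
  rw [← Equiv.sum_comp (piFinTwoEquiv fun _ => Fin 2).symm]
  simp [Fintype.sum_prod_type, Fin.sum_univ_two]
  have h : (finZeroElim : Fin 0 → Fin 2) = ![] := funext fun x => x.elim0
  show f ![0,0] + f ![0,1] + (f ![1,0] + f ![1,1]) = _
  ring

private noncomputable def sgn : Conf 2 2 → ℂ :=
  fun v => if v 0 = v 1 then 0 else if v 0 = 0 then 1 else -1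

private lemma EA : Esm 2 SA.A = Matrix.of fun x u => 2⁻¹ * (sgn x * sgn u) := by
  ext x u
  obtain ⟨a, b, rfl⟩ : ∃ a b, x = ![a, b] := ⟨x 0, x 1, funext fun i => by fin_cases i <;> rfl⟩
  obtain ⟨c, e, rfl⟩ : ∃ c e, u = ![c, e] := ⟨u 0, u 1, funext fun i => by fin_cases i <;> rfl⟩
  fin_cases a <;> fin_cases b <;> fin_cases c <;> fin_cases e <;>
    simp [Esm, Fsw, sgn, Matrix.one_apply, funext_iff, Fin.forall_fin_two]

private lemma sgn00 : sgn ![0,0] = 0 := by norm_num [sgn]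
private lemma sgn01 : sgn ![0,1] = 1 := by norm_num [sgn]
private lemma sgn10 : sgn ![1,0] = -1 := by norm_num [sgn]
private lemma sgn11 : sgn ![1,1] = 0 := by norm_num [sgn]

set_option maxHeartbeats 1000000 in
private lemma colsum (u v : Conf 2 2) :
    Q1 2 (![0,1],![0,1]) (u,v) - Q1 2 (![0,1],![1,0]) (u,v) -
      Q1 2 (![1,0],![0,1]) (u,v) + Q1 2 (![1,0],![1,0]) (u,v) = 0 := by
  obtain ⟨p, q, rfl⟩ : ∃ p q, u = ![p, q] := ⟨u 0, u 1, funext fun i => by fin_cases i <;> rfl⟩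
  obtain ⟨r, s, rfl⟩ : ∃ r s, v = ![r, s] := ⟨v 0, v 1, funext fun i => by fin_cases i <;> rfl⟩
  simp only [Q1, V1, V2, arc, Pplus, Matrix.sub_apply, Matrix.smul_apply, smul_eq_mul,
    Matrix.mul_apply, Matrix.of_apply, Fintype.sum_prod_type]
  simp only [sum_conf]
  fin_cases p <;> fin_cases q <;> fin_cases r <;> fin_cases s <;>
    norm_num [Fin.forall_fin_two]

set_option maxHeartbeats 1000000 in
private lemma rowsum (u v : Conf 2 2) :
    Q1 2 (u,v) (![0,1],![0,1]) - Q1 2 (u,v) (![0,1],![1,0]) -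
      Q1 2 (u,v) (![1,0],![0,1]) + Q1 2 (u,v) (![1,0],![1,0]) = 0 := by
  obtain ⟨p, q, rfl⟩ : ∃ p q, u = ![p, q] := ⟨u 0, u 1, funext fun i => by fin_cases i <;> rfl⟩
  obtain ⟨r, s, rfl⟩ : ∃ r s, v = ![r, s] := ⟨v 0, v 1, funext fun i => by fin_cases i <;> rfl⟩
  simp only [Q1, V1, V2, arc, Pplus, Matrix.sub_apply, Matrix.smul_apply, smul_eq_mul,
    Matrix.mul_apply, Matrix.of_apply, Fintype.sum_prod_type]
  simp only [sum_conf]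
  fin_cases p <;> fin_cases q <;> fin_cases r <;> fin_cases s <;>
    norm_num [Fin.forall_fin_two]

set_option maxHeartbeats 1000000 in
private lemma EEAA_mul_Q1 : EE 2 SA.A SA.A * Q1 2 = 0 := by
  ext ⟨x, y⟩ ⟨u, v⟩
  rw [Matrix.mul_apply, Fintype.sum_prod_type]
  simp only [EE, Matrix.kroneckerMap_apply, EA, Matrix.of_apply]
  simp only [sum_conf]
  simp only [sgn00, sgn01, sgn10, sgn11, mul_zero, zero_mul, mul_one, mul_neg, neg_mul,
    Matrix.zero_apply, add_zero, zero_add, neg_neg]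
  linear_combination (4⁻¹ * (sgn x * sgn y)) * colsum u v

set_option maxHeartbeats 1000000 in
private lemma Q1_mul_EEAA : Q1 2 * EE 2 SA.A SA.A = 0 := by
  ext ⟨x, y⟩ ⟨u, v⟩
  rw [Matrix.mul_apply, Fintype.sum_prod_type]
  simp only [EE, Matrix.kroneckerMap_apply, EA, Matrix.of_apply]
  simp only [sum_conf]
  simp only [sgn00, sgn01, sgn10, sgn11, mul_zero, zero_mul, mul_one, mul_neg, neg_mul,
    Matrix.zero_apply, add_zero, zero_add, neg_neg]
  linear_combination (4⁻¹ * (sgn u * sgn v)) * rowsum x y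

/-- for `d = 2` the Gram matrix of `M̃^(1)` is not invertible
(`b_{AA} = 0`) and the corresponding generators vanish:
`Ĝ^(1)_{[AA][kl]} = 0 = Ĝ^(1)_{[kl][AA]}`; equivalently `(E_A⊗E_A) Q^(1) = 0` and
`Q^(1) (E_A⊗E_A) = 0`. -/
theorem Ghat1_degenerate_d2 :
    bc 2 SA.A SA.A = 0 ∧
    (∀ k l : SA, Ghat1 2 SA.A SA.A k l = 0 ∧ Ghat1 2 k l SA.A SA.A = 0) ∧
    EE 2 SA.A SA.A * Q1 2 = 0 ∧ Q1 2 * EE 2 SA.A SA.A = 0 := by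
  refine ⟨by norm_num [bc], fun k l => ⟨?_, ?_⟩, EEAA_mul_Q1, Q1_mul_EEAA⟩
  · rw [Ghat1, EEAA_mul_Q1, zero_mul]
  · rw [Ghat1, mul_assoc, Q1_mul_EEAA, mul_zero]

end WBA
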